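/- Let (γ,d) be a graphical two-class PAM instance with classes V_1, V_2, and let c_11 = ((Σ_{j∈V_1} d_j) − γ)/2 and c_22 = ((Σ_{j∈V_2} d_j) − γ)/2 be the internal edge counts of any realization in G(γ,d). Let G ∈ G'(γ,d) have degree sequence d', γ' cut edges, and c'_11, c'_22 internal edges in V_1 and V_2 respectively. Then: (a) |d_v − d'_v| ≤ 2 for every vertex v; and (b) |c_11 − c'_11| ≤ 1, |c_22 − c'_22| ≤ 1, |γ − γ'| ≤ 1, and |c_11 − c'_11| + |c_22 − c'_22| + |γ − γ'| ∈ {0, 2}. -/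

import Mathlib

open SimpleGraph
open scoped symmDiff

/-- The degree of vertex `v` in graph `G`. -/
noncomputable def deg {n : ℕ} (G : SimpleGraph (Fin n)) (v : Fin n) : ℕ :=
  (G.neighborSet v).ncard

/-- The number of cut edges of `G`: edges with one endpoint in the class `V₁`
and one endpoint in the class `V₂ = V₁ᶜ`. -/
noncomputable def cutCount {n : ℕ} (V1 : Finset (Fin n)) (G : SimpleGraph (Fin n)) : ℕ :=
  {e ∈ G.edgeSet | ∃ u v : Fin n, e = s(u, v) ∧ u ∈ V1 ∧ v ∉ V1}.ncard

/-- The number of internal edges of `G` inside `V₁`. -/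
noncomputable def intCount1 {n : ℕ} (V1 : Finset (Fin n)) (G : SimpleGraph (Fin n)) : ℕ :=
  {e ∈ G.edgeSet | ∃ u v : Fin n, e = s(u, v) ∧ u ∈ V1 ∧ v ∈ V1}.ncard

/-- The number of internal edges of `G` inside `V₂ = V₁ᶜ`. -/
noncomputable def intCount2 {n : ℕ} (V1 : Finset (Fin n)) (G : SimpleGraph (Fin n)) : ℕ :=
  {e ∈ G.edgeSet | ∃ u v : Fin n, e = s(u, v) ∧ u ∉ V1 ∧ v ∉ V1}.ncard

/-- `G ∈ 𝒢(γ,d)`: vertex `i` has degree `d i` for every `i`, and `G` has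
exactly `γ` cut edges. -/
def memPAM {n : ℕ} (V1 : Finset (Fin n)) (γ : ℕ) (d : Fin n → ℕ)
    (G : SimpleGraph (Fin n)) : Prop :=
  (∀ v, deg G v = d v) ∧ cutCount V1 G = γ

/-- `G ∈ 𝒢'(γ,d)`: the degree sequence `d'` of `G` and its number `γ'` of cut
edges satisfy `Σ d'ᵢ = Σ dᵢ`, `Σ |dᵢ − d'ᵢ| ≤ 4`, and `|γ' − γ| ≤ 1`. -/
def memPAM' {n : ℕ} (V1 : Finset (Fin n)) (γ : ℕ) (d : Fin n → ℕ)
    (G : SimpleGraph (Fin n)) : Prop :=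
  (∑ v, deg G v = ∑ v, d v) ∧
  (∑ v, |(d v : ℤ) - (deg G v : ℤ)| ≤ 4) ∧
  |(cutCount V1 G : ℤ) - (γ : ℤ)| ≤ 1

/-- A hinge flip: replace an edge `{i,j}` of `G` by a non-edge `{j,k}`. -/
def hingeFlip {n : ℕ} (G H : SimpleGraph (Fin n)) : Prop :=
  ∃ i j k : Fin n, G.Adj i j ∧ j ≠ k ∧ ¬ G.Adj j k ∧
    H = (G.deleteEdges {s(i, j)}) ⊔ fromEdgeSet {s(j, k)}

section Aux
open Finset

lemma deg_eq_degree {n : ℕ} (G : SimpleGraph (Fin n)) [DecidableRel G.Adj] (v : Fin n) :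
    deg G v = G.degree v := by
  rw [deg, Set.ncard_eq_toFinset_card', Set.toFinset_card, card_neighborSet_eq_degree]

lemma ncard_filter_eq {n : ℕ} (G : SimpleGraph (Fin n)) [DecidableRel G.Adj]
    (P : Sym2 (Fin n) → Prop) [DecidablePred P] :
    {e ∈ G.edgeSet | P e}.ncard = #(G.edgeFinset.filter P) := by
  rw [← Set.ncard_coe_finset]
  congr 1
  ext e
  simp [mem_edgeFinset]

lemma handshake {n : ℕ} (V : Finset (Fin n)) (G : SimpleGraph (Fin n)) [DecidableRel G.Adj] :
    ∑ v ∈ V, G.degree v =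
      2 * #(G.edgeFinset.filter (fun e => ∃ u w, e = s(u,w) ∧ u ∈ V ∧ w ∈ V)) +
      #(G.edgeFinset.filter (fun e => ∃ u w, e = s(u,w) ∧ u ∈ V ∧ w ∉ V)) := by
  classical
  set D : Finset G.Dart := Finset.univ.filter (fun d => d.fst ∈ V) with hD
  have hcard : #D = ∑ v ∈ V, G.degree v := by
    rw [card_eq_sum_card_fiberwise (f := fun d : G.Dart => d.toProd.1) (t := V)
      (fun d hd => by simpa [hD] using hd)]
    refine Finset.sum_congr rfl fun v hv => ?_
    rw [← G.dart_fst_fiber_card_eq_degree v]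
    congr 1
    ext d
    simp only [hD, mem_filter, mem_univ, true_and]
    constructor
    · rintro ⟨_, h⟩; exact h
    · rintro h; exact ⟨h ▸ hv, h⟩
  have hcard2 : #D = ∑ e ∈ G.edgeFinset, #(D.filter (fun d => d.edge = e)) :=
    card_eq_sum_card_fiberwise (fun d _ => by rw [Finset.mem_coe, mem_edgeFinset]; exact d.edge_mem)
  have key : ∀ e ∈ G.edgeFinset, #(D.filter (fun d => d.edge = e)) =
      (if (∃ u w, e = s(u,w) ∧ u ∈ V ∧ w ∈ V) then 2 else 0) +
      (if (∃ u w, e = s(u,w) ∧ u ∈ V ∧ w ∉ V) then 1 else 0) := by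
    intro e he
    rw [mem_edgeFinset] at he
    induction' e with u w
    have hne : u ≠ w := G.ne_of_adj he
    have hfib : D.filter (fun d => d.edge = s(u,w)) =
        ({(⟨(u,w), he⟩ : G.Dart), ⟨(w,u), he.symm⟩} : Finset G.Dart).filter
          (fun d => d.fst ∈ V) := by
      ext d
      simp only [hD, mem_filter, mem_univ, true_and, mem_insert, mem_singleton,
        SimpleGraph.dart_edge_eq_mk'_iff, SimpleGraph.Dart.ext_iff]
      tauto
    have hd12 : (⟨(u,w), he⟩ : G.Dart) ≠ ⟨(w,u), he.symm⟩ :=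
      fun h => hne (congrArg (fun d : G.Dart => d.toProd.1) h)
    have hint : (∃ a b, s(u,w) = s(a,b) ∧ a ∈ V ∧ b ∈ V) ↔ (u ∈ V ∧ w ∈ V) := by
      constructor
      · rintro ⟨a, b, hab, ha, hb⟩
        rw [Sym2.eq_iff] at hab
        rcases hab with ⟨rfl, rfl⟩ | ⟨rfl, rfl⟩ <;> exact ⟨by assumption, by assumption⟩
      · rintro ⟨hu, hw⟩; exact ⟨u, w, rfl, hu, hw⟩
    have hcut : (∃ a b, s(u,w) = s(a,b) ∧ a ∈ V ∧ b ∉ V) ↔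
        ((u ∈ V ∧ w ∉ V) ∨ (w ∈ V ∧ u ∉ V)) := by
      constructor
      · rintro ⟨a, b, hab, ha, hb⟩
        rw [Sym2.eq_iff] at hab
        rcases hab with ⟨rfl, rfl⟩ | ⟨rfl, rfl⟩
        · exact Or.inl ⟨ha, hb⟩
        · exact Or.inr ⟨ha, hb⟩
      · rintro (⟨h1, h2⟩ | ⟨h1, h2⟩)
        · exact ⟨u, w, rfl, h1, h2⟩
        · exact ⟨w, u, Sym2.eq_swap, h1, h2⟩
    rw [hfib, if_congr hint rfl rfl, if_congr hcut rfl rfl]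
    by_cases hu : u ∈ V <;> by_cases hw : w ∈ V <;>
      simp [Finset.filter_insert, Finset.filter_singleton, hu, hw, hd12]
  rw [← hcard, hcard2, Finset.sum_congr rfl key, Finset.sum_add_distrib]
  congr 1
  · rw [← Finset.sum_filter, Finset.sum_const, smul_eq_mul, mul_comm]
  · rw [← Finset.sum_filter, Finset.sum_const, smul_eq_mul, mul_one]

end Aux

/-- Proposition D.1. For any `G ∈ 𝒢'(γ,d)` in a graphical
two-class PAM instance: (a) every vertex has degree perturbation at most `2`
in absolute value; (b) the internal edge counts of each class and the cut-edge
count each deviate from their target values (`c₁₁`, `c₂₂`, `γ`) by at most `1`,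
and the sum of the three absolute deviations is `0` or `2`. -/
theorem stmt12 {n : ℕ} (V1 : Finset (Fin n)) (γ : ℕ) (d : Fin n → ℕ)
    (c11 c22 : ℕ)
    (hV1 : V1.Nonempty) (hV2 : V1ᶜ.Nonempty)
    (hdpos : ∀ v, 1 ≤ d v) (hγpos : 1 ≤ γ)
    (hgraphical : ∃ H : SimpleGraph (Fin n), memPAM V1 γ d H)
    (hc11 : 2 * c11 + γ = ∑ j ∈ V1, d j)
    (hc22 : 2 * c22 + γ = ∑ j ∈ V1ᶜ, d j)
    (G : SimpleGraph (Fin n)) (hG : memPAM' V1 γ d G) :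
    (∀ v, |(d v : ℤ) - (deg G v : ℤ)| ≤ 2) ∧
    |(c11 : ℤ) - (intCount1 V1 G : ℤ)| ≤ 1 ∧
    |(c22 : ℤ) - (intCount2 V1 G : ℤ)| ≤ 1 ∧
    |(γ : ℤ) - (cutCount V1 G : ℤ)| ≤ 1 ∧
    (|(c11 : ℤ) - (intCount1 V1 G : ℤ)| + |(c22 : ℤ) - (intCount2 V1 G : ℤ)| +
        |(γ : ℤ) - (cutCount V1 G : ℤ)| = 0 ∨
     |(c11 : ℤ) - (intCount1 V1 G : ℤ)| + |(c22 : ℤ) - (intCount2 V1 G : ℤ)| +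
        |(γ : ℤ) - (cutCount V1 G : ℤ)| = 2) := by
  classical
  haveI : DecidableRel G.Adj := Classical.decRel _
  obtain ⟨hdeg, habs, hγ'⟩ := hG
  set x : Fin n → ℤ := fun v => (d v : ℤ) - (deg G v : ℤ) with hx
  -- total sum of deviations is zero
  have hsum0 : ∑ v, x v = 0 := by
    have h := congrArg (Nat.cast : ℕ → ℤ) hdeg
    push_cast at h
    simp only [hx, Finset.sum_sub_distrib]
    omega
  -- part (a)
  have parta : ∀ v, |x v| ≤ 2 := by
    intro v
    have h1 : x v + ∑ w ∈ Finset.univ.erase v, x w = 0 := by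
      rw [Finset.add_sum_erase _ x (Finset.mem_univ v)]; exact hsum0
    have h2 : |∑ w ∈ Finset.univ.erase v, x w| ≤ ∑ w ∈ Finset.univ.erase v, |x w| :=
      Finset.abs_sum_le_sum_abs _ _
    have h3 : |x v| + ∑ w ∈ Finset.univ.erase v, |x w| = ∑ w, |x w| :=
      Finset.add_sum_erase _ (fun w => |x w|) (Finset.mem_univ v)
    have h4 : |∑ w ∈ Finset.univ.erase v, x w| = |x v| := by
      rw [show ∑ w ∈ Finset.univ.erase v, x w = -(x v) by linarith, abs_neg]
    linarith
  -- handshake identities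
  have hA : ∑ v ∈ V1, deg G v = 2 * intCount1 V1 G + cutCount V1 G := by
    simp only [deg_eq_degree]
    rw [handshake V1 G]
    congr 1
    · congr 1
      rw [intCount1, ncard_filter_eq]
    · rw [cutCount, ncard_filter_eq]
  have hB : ∑ v ∈ V1ᶜ, deg G v = 2 * intCount2 V1 G + cutCount V1 G := by
    simp only [deg_eq_degree]
    rw [handshake V1ᶜ G]
    congr 1
    · congr 1
      rw [intCount2, ncard_filter_eq]
      congr 1
      apply Finset.filter_congr
      intro e _
      simp [Finset.mem_compl]
    · rw [cutCount, ncard_filter_eq]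
      congr 1
      apply Finset.filter_congr
      intro e _
      constructor
      · rintro ⟨a, b, rfl, ha, hb⟩
        exact ⟨b, a, Sym2.eq_swap, by simpa using hb, by simpa using ha⟩
      · rintro ⟨a, b, rfl, ha, hb⟩
        exact ⟨b, a, Sym2.eq_swap, by simpa [Finset.mem_compl] using hb,
          by simpa [Finset.mem_compl] using ha⟩
  -- abbreviations
  set a : ℤ := (c11 : ℤ) - (intCount1 V1 G : ℤ) with hadef
  set b : ℤ := (c22 : ℤ) - (intCount2 V1 G : ℤ) with hbdef
  set g : ℤ := (γ : ℤ) - (cutCount V1 G : ℤ) with hgdef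
  set S1 : ℤ := ∑ v ∈ V1, x v with hS1def
  set S2 : ℤ := ∑ v ∈ V1ᶜ, x v with hS2def
  have hS12 : S1 + S2 = 0 := by
    rw [hS1def, hS2def, Finset.sum_add_sum_compl]; exact hsum0
  have habs12 : |S1| + |S2| ≤ 4 := by
    have h1 : |S1| ≤ ∑ v ∈ V1, |x v| := Finset.abs_sum_le_sum_abs _ _
    have h2 : |S2| ≤ ∑ v ∈ V1ᶜ, |x v| := Finset.abs_sum_le_sum_abs _ _
    have h3 : ∑ v ∈ V1, |x v| + ∑ v ∈ V1ᶜ, |x v| = ∑ v, |x v| :=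
      Finset.sum_add_sum_compl _ _
    linarith
  have hS1b : |S1| ≤ 2 := by
    have : |S2| = |S1| := by rw [show S2 = -S1 by linarith, abs_neg]
    linarith
  have hgb : |g| ≤ 1 := by rw [hgdef, abs_sub_comm]; exact hγ'
  have heq1 : 2 * a + g = S1 := by
    have h1 := congrArg (Nat.cast : ℕ → ℤ) hA
    have h2 := congrArg (Nat.cast : ℕ → ℤ) hc11
    push_cast at h1 h2
    have h3 : S1 = (∑ v ∈ V1, (d v : ℤ)) - ∑ v ∈ V1, (deg G v : ℤ) := by
      rw [hS1def]; simp [hx, Finset.sum_sub_distrib]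
    rw [hadef, hgdef]
    linarith
  have heq2 : 2 * b + g = S2 := by
    have h1 := congrArg (Nat.cast : ℕ → ℤ) hB
    have h2 := congrArg (Nat.cast : ℕ → ℤ) hc22
    push_cast at h1 h2
    have h3 : S2 = (∑ v ∈ V1ᶜ, (d v : ℤ)) - ∑ v ∈ V1ᶜ, (deg G v : ℤ) := by
      rw [hS2def]; simp [hx, Finset.sum_sub_distrib]
    rw [hbdef, hgdef]
    linarith
  obtain ⟨hS1l, hS1r⟩ := abs_le.mp hS1b
  obtain ⟨hgl, hgr⟩ := abs_le.mp hgb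
  have hab : a + b + g = 0 := by linarith
  have haa : |a| ≤ 1 := by rw [abs_le]; omega
  have hbb : |b| ≤ 1 := by rw [abs_le]; omega
  refine ⟨parta, haa, hbb, hgb, ?_⟩
  obtain ⟨hal, har⟩ := abs_le.mp haa
  obtain ⟨hbl, hbr⟩ := abs_le.mp hbb
  rcases abs_cases a with ⟨ha1, ha2⟩ | ⟨ha1, ha2⟩ <;>
    rcases abs_cases b with ⟨hb1, hb2⟩ | ⟨hb1, hb2⟩ <;>
    rcases abs_cases g with ⟨hg1, hg2⟩ | ⟨hg1, hg2⟩ <;>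
    rw [ha1, hb1, hg1] <;> omega
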